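/- Let 0 < b ≤ 1, a > 0, and k₀ ≥ 0 be an integer. Then for all sufficiently large l and all k ≥ l: if b = 1, then ∏_{i=l}^{k} (1 − a/(i+k₀)^b) ≤ ((l+k₀)/(k+k₀))^a; and if b ∈ (0,1), then ∏_{i=l}^{k} (1 − a/(i+k₀)^b) ≤ exp( (a/(1−b)) ((l+k₀)^{1−b} − (k+k₀+1)^{1−b}) ). -/

import Mathlib

open Filter Real
open scoped Topology

private lemma tele_sum (f : ℕ → ℝ) (l : ℕ) : ∀ k, l ≤ k →
    ∑ i ∈ Finset.Icc l k, (f i - f (i + 1)) = f l - f (k + 1) := by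
  intro k hk
  induction k, hk using Nat.le_induction with
  | base => simp
  | succ k hk ih =>
      rw [Finset.sum_Icc_succ_top (by omega), ih]
      ring

private lemma term1 (a n : ℝ) (ha : 0 ≤ a) (hn : 1 ≤ n) :
    1 - a / n ≤ Real.exp (a * (Real.log n - Real.log (n + 1))) := by
  have hn0 : 0 < n := lt_of_lt_of_le one_pos hn
  have h1 : 1 - a / n ≤ Real.exp (-(a / n)) := by
    have := Real.add_one_le_exp (-(a / n)); linarith
  refine h1.trans (Real.exp_le_exp.mpr ?_)
  have hlog : Real.log (n + 1) - Real.log n = Real.log ((n + 1) / n) := by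
    rw [Real.log_div (by linarith) hn0.ne']
  have hle : Real.log ((n + 1) / n) ≤ (n + 1) / n - 1 :=
    Real.log_le_sub_one_of_pos (by positivity)
  have h2 : (n + 1) / n - 1 = 1 / n := by field_simp; ring
  have h3 : Real.log (n + 1) - Real.log n ≤ 1 / n := by rw [hlog]; linarith
  have h4 : a * (Real.log (n + 1) - Real.log n) ≤ a * (1 / n) :=
    mul_le_mul_of_nonneg_left h3 ha
  have : a * (1 / n) = a / n := by ring
  nlinarith [h4]

private lemma term2 (a b n : ℝ) (ha : 0 ≤ a) (hb0 : 0 < b) (hb1 : b < 1) (hn : 1 ≤ n) :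
    1 - a / n ^ b ≤ Real.exp (a / (1 - b) * (n ^ (1 - b) - (n + 1) ^ (1 - b))) := by
  have hn0 : 0 < n := lt_of_lt_of_le one_pos hn
  have h1 : 1 - a / n ^ b ≤ Real.exp (-(a / n ^ b)) := by
    have := Real.add_one_le_exp (-(a / n ^ b)); linarith
  refine h1.trans (Real.exp_le_exp.mpr ?_)
  have hb' : 0 < 1 - b := by linarith
  have hbern : (1 + 1 / n) ^ (1 - b) ≤ 1 + (1 - b) * (1 / n) :=
    rpow_one_add_le_one_add_mul_self (by linarith [one_div_nonneg.mpr hn0.le]) hb'.le (by linarith)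
  have hsplit : (n + 1 : ℝ) = n * (1 + 1 / n) := by field_simp
  have hmul : (n + 1) ^ (1 - b) = n ^ (1 - b) * (1 + 1 / n) ^ (1 - b) := by
    rw [hsplit, Real.mul_rpow hn0.le (by positivity)]
  have hpow : n ^ (1 - b) * (1 / n) = 1 / n ^ b := by
    rw [Real.rpow_sub hn0, Real.rpow_one]
    field_simp
  have hkey : (n + 1) ^ (1 - b) ≤ n ^ (1 - b) + (1 - b) * (1 / n ^ b) := by
    calc (n + 1) ^ (1 - b) = n ^ (1 - b) * (1 + 1 / n) ^ (1 - b) := hmul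
      _ ≤ n ^ (1 - b) * (1 + (1 - b) * (1 / n)) :=
          mul_le_mul_of_nonneg_left hbern (Real.rpow_nonneg hn0.le _)
      _ = n ^ (1 - b) + (1 - b) * (n ^ (1 - b) * (1 / n)) := by ring
      _ = n ^ (1 - b) + (1 - b) * (1 / n ^ b) := by rw [hpow]
  have hdiff : (n + 1) ^ (1 - b) - n ^ (1 - b) ≤ (1 - b) * (1 / n ^ b) := by linarith
  have h2 : a / (1 - b) * ((n + 1) ^ (1 - b) - n ^ (1 - b)) ≤
      a / (1 - b) * ((1 - b) * (1 / n ^ b)) :=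
    mul_le_mul_of_nonneg_left hdiff (by positivity)
  have h3 : a / (1 - b) * ((1 - b) * (1 / n ^ b)) = a / n ^ b := by
    field_simp
  nlinarith [h2]

/-- Lemma 3, first part, of the paper.
For `0 < b ≤ 1`, `a > 0` and an integer `k₀ ≥ 0`, for all sufficiently large `l` and
all `k ≥ l`: if `b = 1` then `∏_{i=l}^k (1 − a/(i+k₀)^b) ≤ ((l+k₀)/(k+k₀))^a`, and if
`b < 1` then `∏_{i=l}^k (1 − a/(i+k₀)^b) ≤ exp((a/(1−b))((l+k₀)^{1−b} − (k+k₀+1)^{1−b}))`. -/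
theorem prod_one_sub_bound
    (a : ℝ) (ha : 0 < a) (b : ℝ) (hb0 : 0 < b) (hb1 : b ≤ 1) (k₀ : ℕ) :
    ∃ L : ℕ, ∀ l ≥ L, ∀ k ≥ l,
      (b = 1 →
        ∏ i ∈ Finset.Icc l k, (1 - a / ((i : ℝ) + k₀) ^ b) ≤
          (((l : ℝ) + k₀) / ((k : ℝ) + k₀)) ^ a) ∧
      (b < 1 →
        ∏ i ∈ Finset.Icc l k, (1 - a / ((i : ℝ) + k₀) ^ b) ≤
          Real.exp (a / (1 - b) *
            (((l : ℝ) + k₀) ^ (1 - b) - ((k : ℝ) + k₀ + 1) ^ (1 - b)))) := by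
  refine ⟨⌈a ^ (1 / b)⌉₊ + 1, fun l hl k hk => ?_⟩
  have hL1 : 1 ≤ l := le_trans (Nat.le_add_left 1 _) hl
  have hlR : (1 : ℝ) ≤ (l : ℝ) + k₀ := by
    have : (1 : ℝ) ≤ (l : ℝ) := by exact_mod_cast hL1
    linarith [Nat.cast_nonneg (α := ℝ) k₀]
  have hkR : (l : ℝ) + k₀ ≤ (k : ℝ) + k₀ := by
    have : (l : ℝ) ≤ (k : ℝ) := by exact_mod_cast hk
    linarith
  have key : ∀ i ∈ Finset.Icc l k, (1 : ℝ) ≤ (i : ℝ) + k₀ ∧ a ≤ ((i : ℝ) + k₀) ^ b := by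
    intro i hi
    obtain ⟨hli, _⟩ := Finset.mem_Icc.mp hi
    have hil : (l : ℝ) ≤ (i : ℝ) := by exact_mod_cast hli
    have h1 : (1 : ℝ) ≤ (i : ℝ) + k₀ := by linarith
    refine ⟨h1, ?_⟩
    have hceil : a ^ (1 / b) ≤ (i : ℝ) + k₀ := by
      have h0 : a ^ (1 / b) ≤ (⌈a ^ (1 / b)⌉₊ : ℝ) := Nat.le_ceil _
      have h2 : ((⌈a ^ (1 / b)⌉₊ : ℕ) : ℝ) ≤ (l : ℝ) := by
        exact_mod_cast le_trans (Nat.le_succ _) hl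
      linarith [Nat.cast_nonneg (α := ℝ) k₀]
    calc a = (a ^ (1 / b)) ^ b := by
            rw [← Real.rpow_mul ha.le, one_div_mul_cancel hb0.ne', Real.rpow_one]
      _ ≤ ((i : ℝ) + k₀) ^ b := Real.rpow_le_rpow (Real.rpow_nonneg ha.le _) hceil hb0.le
  have nonneg : ∀ i ∈ Finset.Icc l k, (0 : ℝ) ≤ 1 - a / ((i : ℝ) + k₀) ^ b := by
    intro i hi
    obtain ⟨h1, h2⟩ := key i hi
    have hp : (0 : ℝ) < ((i : ℝ) + k₀) ^ b := Real.rpow_pos_of_pos (by linarith) b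
    have : a / ((i : ℝ) + k₀) ^ b ≤ 1 := (div_le_one hp).mpr h2
    linarith
  constructor
  · -- b = 1
    intro hb; subst hb
    simp only [Real.rpow_one] at nonneg ⊢
    set f : ℕ → ℝ := fun i => a * Real.log ((i : ℝ) + k₀) with hf
    calc ∏ i ∈ Finset.Icc l k, (1 - a / ((i : ℝ) + k₀))
        ≤ ∏ i ∈ Finset.Icc l k, Real.exp (f i - f (i + 1)) := by
          apply Finset.prod_le_prod nonneg
          intro i hi
          have h1 := (key i hi).1
          have := term1 a ((i : ℝ) + k₀) ha.le h1
          convert this using 2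
          · rfl
          simp only [hf]
          push_cast
          ring
      _ = Real.exp (∑ i ∈ Finset.Icc l k, (f i - f (i + 1))) := (Real.exp_sum _ _).symm
      _ = Real.exp (f l - f (k + 1)) := by rw [tele_sum f l k hk]
      _ ≤ (((l : ℝ) + k₀) / ((k : ℝ) + k₀)) ^ a := by
          have hx : (0 : ℝ) < (l : ℝ) + k₀ := by linarith
          have hy : (0 : ℝ) < (k : ℝ) + k₀ := by linarith
          have hy1 : (0 : ℝ) < ((k : ℕ) + 1 : ℕ) + (k₀ : ℝ) := by push_cast; linarith
          have heq : f l - f (k + 1) =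
              a * Real.log (((l : ℝ) + k₀) / (((k : ℝ) + 1) + k₀)) := by
            simp only [hf]
            rw [Real.log_div hx.ne' (by push_cast; linarith)]
            push_cast
            ring
          rw [heq]
          have hrw : Real.exp (a * Real.log (((l : ℝ) + k₀) / (((k : ℝ) + 1) + k₀))) =
              (((l : ℝ) + k₀) / (((k : ℝ) + 1) + k₀)) ^ a := by
            rw [Real.rpow_def_of_pos (by positivity), mul_comm]
          rw [hrw]
          gcongr
          linarith
  · -- b < 1
    intro hb
    have hb' : 0 < 1 - b := by linarith
    set f : ℕ → ℝ := fun i => a / (1 - b) * ((i : ℝ) + k₀) ^ (1 - b) with hf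
    calc ∏ i ∈ Finset.Icc l k, (1 - a / ((i : ℝ) + k₀) ^ b)
        ≤ ∏ i ∈ Finset.Icc l k, Real.exp (f i - f (i + 1)) := by
          apply Finset.prod_le_prod nonneg
          intro i hi
          have h1 := (key i hi).1
          have := term2 a b ((i : ℝ) + k₀) ha.le hb0 hb h1
          convert this using 2
          · rfl
          simp only [hf]
          have : ((i + 1 : ℕ) : ℝ) + k₀ = ((i : ℝ) + k₀) + 1 := by push_cast; ring
          rw [this]
          ring
      _ = Real.exp (∑ i ∈ Finset.Icc l k, (f i - f (i + 1))) := (Real.exp_sum _ _).symm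
      _ = Real.exp (f l - f (k + 1)) := by rw [tele_sum f l k hk]
      _ ≤ Real.exp (a / (1 - b) *
            (((l : ℝ) + k₀) ^ (1 - b) - ((k : ℝ) + k₀ + 1) ^ (1 - b))) := by
          apply le_of_eq
          congr 1
          simp only [hf]
          have : ((k + 1 : ℕ) : ℝ) + k₀ = ((k : ℝ) + k₀) + 1 := by push_cast; ring
          rw [this]
          ring
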